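/- Let Q be a positivity preserving form with compact resolvent, λ an eigenvalue of Q with eigenfunction f, and let 𝒜 be a nest such that f± ∈ D(Q^𝒜_{F±}), where F± = {±f > 0}. Then the resolvent of the restricted form satisfies G₁^{𝒜,F⁺} f⁺ ≥ f⁺/(1+λ) and G₁^{𝒜,F⁻} f⁻ ≥ f⁻/(1+λ) almost everywhere. -/

import Mathlib

open MeasureTheory Filter Topology RealInnerProductSpace

noncomputable section

variable {X : Type*} [MeasurableSpace X]

open scoped Classical in
/-- Multiplication by the indicator function of a set `A`, as a map on `L²`. -/
def indMul {μ : Measure X} (A : Set X) (f : Lp ℝ 2 μ) : Lp ℝ 2 μ :=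
  if h : MeasurableSet A then ((Lp.memLp f).indicator h).toLp else 0

/-- A closed (nonnegative, symmetric) quadratic form in the wide sense on `L²(X,m)`:
its domain is a not necessarily dense subspace which is complete in the form norm. -/
structure WideForm (μ : Measure X) where
  dom : Submodule ℝ (Lp ℝ 2 μ)
  Q : Lp ℝ 2 μ → Lp ℝ 2 μ → ℝ
  symm : ∀ u v, Q u v = Q v u
  add_left : ∀ u v w, Q (u + v) w = Q u w + Q v w
  smul_left : ∀ (c : ℝ) u v, Q (c • u) v = c * Q u v
  nonneg : ∀ u, 0 ≤ Q u u
  closed : ∀ f : ℕ → Lp ℝ 2 μ, (∀ n, f n ∈ dom) →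
    (∀ ε > 0, ∃ N, ∀ m ≥ N, ∀ n ≥ N,
      Q (f m - f n) (f m - f n) + ‖f m - f n‖ ^ 2 < ε) →
    ∃ g ∈ dom, Tendsto (fun n => Q (f n - g) (f n - g) + ‖f n - g‖ ^ 2) atTop (nhds 0)

/-- `G` is the resolvent family of the closed form `T`. -/
def WideForm.IsResolvent {μ : Measure X} (T : WideForm μ)
    (G : ℝ → Lp ℝ 2 μ →L[ℝ] Lp ℝ 2 μ) : Prop :=
  ∀ α > 0, ∀ u, G α u ∈ T.dom ∧
    ∀ v ∈ T.dom, T.Q (G α u) v + α * ⟪G α u, v⟫ = ⟪u, v⟫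

/-- `T` is positivity preserving. -/
def WideForm.PosPres {μ : Measure X} (T : WideForm μ) : Prop :=
  ∀ u ∈ T.dom, |u| ∈ T.dom ∧ T.Q |u| |u| ≤ T.Q u u

/-- The domain of the restriction of `T` to `B` with respect to the nest `𝒜`:
the form-norm closure of the union of the domains of the restrictions to `B ∩ 𝒜 n`. -/
def NestDom {μ : Measure X} (T : WideForm μ) (𝒜 : ℕ → Set X) (B : Set X) :
    Set (Lp ℝ 2 μ) :=
  {f | f ∈ T.dom ∧ ∃ g : ℕ → Lp ℝ 2 μ,
    (∀ k, g k ∈ T.dom ∧ ∃ n, indMul (B ∩ 𝒜 n) (g k) = g k) ∧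
    Tendsto (fun k => T.Q (g k - f) (g k - f) + ‖g k - f‖ ^ 2) atTop (nhds 0)}

/-- `C` is invariant for the restriction `Q^𝒜_B` (form characterization, valid for
positivity preserving forms). -/
def NestInvariant {μ : Measure X} (T : WideForm μ) (𝒜 : ℕ → Set X) (B C : Set X) : Prop :=
  MeasurableSet C ∧ ∀ f ∈ NestDom T 𝒜 B, indMul C f ∈ NestDom T 𝒜 B ∧
    T.Q f f = T.Q (indMul C f) (indMul C f) + T.Q (f - indMul C f) (f - indMul C f)

/-- `C` is a connected component of the restriction `Q^𝒜_B`: an invariant set of positive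
measure whose restriction is irreducible. -/
def NestComponent {μ : Measure X} (T : WideForm μ) (𝒜 : ℕ → Set X) (B C : Set X) : Prop :=
  NestInvariant T 𝒜 B C ∧ 0 < μ C ∧
    ∀ D : Set X, MeasurableSet D → D ⊆ C →
      (∀ f ∈ NestDom T 𝒜 B, indMul C f = f →
        (indMul D f ∈ NestDom T 𝒜 B ∧
          T.Q f f = T.Q (indMul D f) (indMul D f)
            + T.Q (f - indMul D f) (f - indMul D f))) →
      μ D = 0 ∨ μ (C \ D) = 0

namespace WideForm

variable {μ : Measure X} (T : WideForm μ)

lemma Q_add_right (u v w : Lp ℝ 2 μ) : T.Q u (v + w) = T.Q u v + T.Q u w := by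
  rw [T.symm, T.add_left, T.symm v u, T.symm w u]

lemma Q_smul_right (c : ℝ) (u v : Lp ℝ 2 μ) : T.Q u (c • v) = c * T.Q u v := by
  rw [T.symm, T.smul_left, T.symm]

lemma Q_neg_left (u v : Lp ℝ 2 μ) : T.Q (-u) v = - T.Q u v := by
  rw [← neg_one_smul ℝ u, T.smul_left]; ring

lemma Q_sub_left (u v w : Lp ℝ 2 μ) : T.Q (u - v) w = T.Q u w - T.Q v w := by
  rw [sub_eq_add_neg, T.add_left, T.Q_neg_left]; ring

lemma Q_sub_right (u v w : Lp ℝ 2 μ) : T.Q u (v - w) = T.Q u v - T.Q u w := by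
  rw [T.symm, T.Q_sub_left, T.symm v u, T.symm w u]

lemma Q_add_add (u v : Lp ℝ 2 μ) :
    T.Q (u + v) (u + v) = T.Q u u + 2 * T.Q u v + T.Q v v := by
  rw [T.add_left, T.Q_add_right, T.Q_add_right, T.symm v u]; ring

lemma Q_sub_sub (u v : Lp ℝ 2 μ) :
    T.Q (u - v) (u - v) = T.Q u u - 2 * T.Q u v + T.Q v v := by
  rw [T.Q_sub_left, T.Q_sub_right, T.Q_sub_right, T.symm v u]; ring

/-- the form inner product `Q₁`. -/
def Q1 (u v : Lp ℝ 2 μ) : ℝ := T.Q u v + ⟪u, v⟫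

lemma Q1_symm (u v : Lp ℝ 2 μ) : T.Q1 u v = T.Q1 v u := by
  rw [Q1, Q1, T.symm, real_inner_comm]

lemma Q1_add_left (u v w : Lp ℝ 2 μ) : T.Q1 (u + v) w = T.Q1 u w + T.Q1 v w := by
  rw [Q1, Q1, Q1, T.add_left, inner_add_left]; ring

lemma Q1_smul_left (c : ℝ) (u v : Lp ℝ 2 μ) : T.Q1 (c • u) v = c * T.Q1 u v := by
  rw [Q1, Q1, T.smul_left, real_inner_smul_left]; ring

lemma Q1_sub_left (u v w : Lp ℝ 2 μ) : T.Q1 (u - v) w = T.Q1 u w - T.Q1 v w := by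
  rw [Q1, Q1, Q1, T.Q_sub_left, inner_sub_left]; ring

lemma Q1_self_nonneg (u : Lp ℝ 2 μ) : 0 ≤ T.Q1 u u :=
  add_nonneg (T.nonneg u) real_inner_self_nonneg

lemma norm_sq_le_Q1 (u : Lp ℝ 2 μ) : ‖u‖ ^ 2 ≤ T.Q1 u u := by
  rw [Q1, ← real_inner_self_eq_norm_sq]
  have := T.nonneg u; linarith

lemma Q1_add_right (u v w : Lp ℝ 2 μ) : T.Q1 u (v + w) = T.Q1 u v + T.Q1 u w := by
  rw [T.Q1_symm, T.Q1_add_left, T.Q1_symm v u, T.Q1_symm w u]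

lemma Q1_expand (u v : Lp ℝ 2 μ) :
    T.Q1 (u + v) (u + v) = T.Q1 u u + 2 * T.Q1 u v + T.Q1 v v := by
  rw [T.Q1_add_left, T.Q1_add_right, T.Q1_add_right, T.Q1_symm v u]; ring

lemma Q1_cs (u v : Lp ℝ 2 μ) : (T.Q1 u v) ^ 2 ≤ T.Q1 u u * T.Q1 v v := by
  have key : ∀ t : ℝ, 0 ≤ T.Q1 v v * (t * t) + (2 * T.Q1 u v) * t + T.Q1 u u := by
    intro t
    have h := T.Q1_self_nonneg (u + t • v)
    rw [T.Q1_expand] at h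
    have h1 : T.Q1 u (t • v) = t * T.Q1 u v := by
      rw [T.Q1_symm, T.Q1_smul_left, T.Q1_symm]
    have h2 : T.Q1 (t • v) (t • v) = t * (t * T.Q1 v v) := by
      rw [T.Q1_smul_left, T.Q1_symm, T.Q1_smul_left, T.Q1_symm]
    rw [h1, h2] at h; nlinarith
  have := discrim_le_zero key
  rw [discrim] at this
  nlinarith

lemma Q_cs (u v : Lp ℝ 2 μ) : (T.Q u v) ^ 2 ≤ T.Q u u * T.Q v v := by
  have key : ∀ t : ℝ, 0 ≤ T.Q v v * (t * t) + (2 * T.Q u v) * t + T.Q u u := by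
    intro t
    have h := T.nonneg (u + t • v)
    rw [T.Q_add_add] at h
    have h1 : T.Q u (t • v) = t * T.Q u v := by rw [T.Q_smul_right]
    have h2 : T.Q (t • v) (t • v) = t * (t * T.Q v v) := by
      rw [T.smul_left, T.Q_smul_right]
    rw [h1, h2] at h; nlinarith
  have := discrim_le_zero key
  rw [discrim] at this
  nlinarith

end WideForm

section IndMul

variable {μ : Measure X}

lemma indMul_coeFn {A : Set X} (hA : MeasurableSet A) (f : Lp ℝ 2 μ) :
    (indMul A f : X → ℝ) =ᵐ[μ] A.indicator f := by
  rw [indMul, dif_pos hA]; exact MemLp.coeFn_toLp _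

lemma indMul_eq_self_iff {A : Set X} (hA : MeasurableSet A) {f : Lp ℝ 2 μ} :
    indMul A f = f ↔ ∀ᵐ x ∂μ, x ∉ A → (f : X → ℝ) x = 0 := by
  constructor
  · intro h
    have h2 : (indMul A f : X → ℝ) =ᵐ[μ] f := by rw [h]
    filter_upwards [indMul_coeFn hA f, h2] with x h1 h2 hx
    rw [← h2, h1, Set.indicator_of_notMem hx]
  · intro h
    apply Lp.ext
    filter_upwards [indMul_coeFn hA f, h] with x h1 h2
    rw [h1]
    by_cases hx : x ∈ A
    · exact Set.indicator_of_mem hx _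
    · rw [Set.indicator_of_notMem hx, h2 hx]

lemma indMul_eq_zero_iff {A : Set X} (hA : MeasurableSet A) {f : Lp ℝ 2 μ} :
    indMul A f = 0 ↔ ∀ᵐ x ∂μ, x ∈ A → (f : X → ℝ) x = 0 := by
  constructor
  · intro h
    have h2 : (indMul A f : X → ℝ) =ᵐ[μ] (0 : Lp ℝ 2 μ) := by rw [h]
    filter_upwards [indMul_coeFn hA f, h2, Lp.coeFn_zero (E := ℝ) (p := 2) (μ := μ)]
      with x h1 h2 h3 hx
    rw [← Set.indicator_of_mem hx (f : X → ℝ), ← h1, h2, h3]; rfl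
  · intro h
    apply Lp.ext
    filter_upwards [indMul_coeFn hA f, h, Lp.coeFn_zero (E := ℝ) (p := 2) (μ := μ)]
      with x h1 h2 h3
    rw [h1, h3]
    by_cases hx : x ∈ A
    · rw [Set.indicator_of_mem hx, h2 hx]; rfl
    · rw [Set.indicator_of_notMem hx]; rfl

lemma indMul_norm_le {A : Set X} (hA : MeasurableSet A) (f : Lp ℝ 2 μ) :
    ‖indMul A f‖ ≤ ‖f‖ := by
  apply norm_le_norm_of_abs_le_abs
  rw [← Lp.coeFn_le]
  filter_upwards [Lp.coeFn_abs (indMul A f), Lp.coeFn_abs f, indMul_coeFn hA f]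
    with x h1 h2 h3
  rw [h1, h2, h3]
  by_cases hx : x ∈ A
  · rw [Set.indicator_of_mem hx]
  · rw [Set.indicator_of_notMem hx]; simp

lemma indMul_sub {A : Set X} (hA : MeasurableSet A) (f g : Lp ℝ 2 μ) :
    indMul A (f - g) = indMul A f - indMul A g := by
  apply Lp.ext
  filter_upwards [indMul_coeFn hA (f - g), indMul_coeFn hA f, indMul_coeFn hA g,
    Lp.coeFn_sub (indMul A f) (indMul A g), Lp.coeFn_sub f g] with x h1 h2 h3 h4 h5
  rw [h1, h4]
  simp only [Pi.sub_apply, h2, h3]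
  by_cases hx : x ∈ A
  · rw [Set.indicator_of_mem hx, Set.indicator_of_mem hx, Set.indicator_of_mem hx, h5]
    rfl
  · simp [Set.indicator_of_notMem hx]

end IndMul

namespace WideForm

variable {μ : Measure X} (T : WideForm μ)

/-- Elements of the nest domain vanish a.e. outside `B`. -/
lemma nestdom_support {𝒜 : ℕ → Set X} {B : Set X} (hB : MeasurableSet B)
    (hA : ∀ n, MeasurableSet (𝒜 n)) {v : Lp ℝ 2 μ} (hv : v ∈ NestDom T 𝒜 B) :
    ∀ᵐ x ∂μ, x ∉ B → (v : X → ℝ) x = 0 := by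
  obtain ⟨hvdom, g, hg, htend⟩ := hv
  have hzero : ∀ k, indMul Bᶜ (g k) = 0 := by
    intro k
    obtain ⟨n, hn⟩ := (hg k).2
    have h0 := (indMul_eq_self_iff ((hB.inter (hA n))) (f := g k)).1 hn
    rw [indMul_eq_zero_iff hB.compl]
    filter_upwards [h0] with x hx hxB
    exact hx (fun hmem => hxB hmem.1)
  have hnorm : ∀ k, ‖indMul Bᶜ v‖ ≤ ‖g k - v‖ := by
    intro k
    calc ‖indMul Bᶜ v‖ = ‖indMul Bᶜ (g k - v)‖ := by
          rw [indMul_sub hB.compl, hzero k, zero_sub, norm_neg]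
      _ ≤ ‖g k - v‖ := indMul_norm_le hB.compl _
  have hL2 : Tendsto (fun k => ‖g k - v‖) atTop (nhds 0) := by
    have hsq : Tendsto (fun k => ‖g k - v‖ ^ 2) atTop (nhds 0) := by
      apply squeeze_zero (fun k => sq_nonneg _) (fun k => ?_) htend
      have := T.nonneg (g k - v); linarith
    have := hsq.sqrt
    rw [Real.sqrt_zero] at this
    refine this.congr fun k => ?_
    rw [Real.sqrt_sq (norm_nonneg _)]
  have : ‖indMul Bᶜ v‖ ≤ 0 := ge_of_tendsto hL2 (Eventually.of_forall hnorm)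
  have h0 : indMul Bᶜ v = 0 := by
    rw [← norm_le_zero_iff]; exact this
  have := (indMul_eq_zero_iff hB.compl).1 h0
  filter_upwards [this] with x hx hxB
  exact hx hxB

end WideForm

namespace WideForm

variable {μ : Measure X}

/-- The form domain as a Hilbert space with inner product `Q₁`. -/
def HS (T : WideForm μ) : Type _ := ↥T.dom

variable (T : WideForm μ)

instance : AddCommGroup (HS T) := inferInstanceAs (AddCommGroup ↥T.dom)
instance : Module ℝ (HS T) := inferInstanceAs (Module ℝ ↥T.dom)

def HS.mk (u : Lp ℝ 2 μ) (hu : u ∈ T.dom) : HS T := show ↥T.dom from ⟨u, hu⟩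

def HS.toLp (x : HS T) : Lp ℝ 2 μ := (show ↥T.dom from x).1

lemma HS.mem (x : HS T) : x.toLp ∈ T.dom := (show ↥T.dom from x).2

lemma HS.ext {x y : HS T} (h : x.toLp = y.toLp) : x = y := Subtype.ext h

@[simp] lemma HS.toLp_mk (u : Lp ℝ 2 μ) (hu : u ∈ T.dom) : (HS.mk T u hu).toLp = u := rfl

@[simp] lemma HS.toLp_add (x y : HS T) : (x + y).toLp = x.toLp + y.toLp := rfl
@[simp] lemma HS.toLp_sub (x y : HS T) : (x - y).toLp = x.toLp - y.toLp := rfl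
@[simp] lemma HS.toLp_smul (c : ℝ) (x : HS T) : (c • x).toLp = c • x.toLp := rfl
@[simp] lemma HS.toLp_neg (x : HS T) : (-x).toLp = -x.toLp := rfl
@[simp] lemma HS.toLp_zero : (0 : HS T).toLp = 0 := rfl

def HScore : InnerProductSpace.Core ℝ (HS T) where
  inner x y := T.Q1 x.toLp y.toLp
  conj_inner_symm x y := by simp only [starRingEnd_apply, star_trivial]; exact T.Q1_symm _ _
  re_inner_nonneg x := by simpa using T.Q1_self_nonneg x.toLp
  add_left x y z := by simpa using T.Q1_add_left x.toLp y.toLp z.toLp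
  smul_left x y c := by
    simpa [starRingEnd_apply, star_trivial] using T.Q1_smul_left c x.toLp y.toLp
  definite x h := by
    have h2 : ‖x.toLp‖ ^ 2 ≤ 0 := by
      have := T.norm_sq_le_Q1 x.toLp
      calc ‖x.toLp‖ ^ 2 ≤ T.Q1 x.toLp x.toLp := this
        _ = 0 := h
    have : x.toLp = 0 := by
      rw [← norm_le_zero_iff]; nlinarith [norm_nonneg x.toLp]
    exact HS.ext T this

noncomputable instance : NormedAddCommGroup (HS T) :=
  @InnerProductSpace.Core.toNormedAddCommGroup ℝ (HS T) _ _ _ (T.HScore)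

noncomputable instance : InnerProductSpace ℝ (HS T) := .ofCore T.HScore.toCore

lemma HS.inner_def (x y : HS T) : ⟪x, y⟫ = T.Q1 x.toLp y.toLp := rfl

lemma HS.norm_sq (x : HS T) : ‖x‖ ^ 2 = T.Q1 x.toLp x.toLp := by
  rw [← real_inner_self_eq_norm_sq]; rfl

lemma HS.norm_eq (x : HS T) : ‖x‖ = Real.sqrt (T.Q1 x.toLp x.toLp) := by
  rw [← HS.norm_sq, Real.sqrt_sq (norm_nonneg _)]

lemma HS.norm_toLp_le (x : HS T) : ‖x.toLp‖ ≤ ‖x‖ := by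
  have h1 := T.norm_sq_le_Q1 x.toLp
  rw [← HS.norm_sq] at h1
  nlinarith [norm_nonneg x.toLp, norm_nonneg x]

instance : CompleteSpace (HS T) := by
  apply Metric.complete_of_cauchySeq_tendsto
  intro u hu
  have hdom : ∀ n, (u n).toLp ∈ T.dom := fun n => HS.mem T (u n)
  have hcau : ∀ ε > 0, ∃ N, ∀ m ≥ N, ∀ n ≥ N,
      T.Q ((u m).toLp - (u n).toLp) ((u m).toLp - (u n).toLp)
        + ‖(u m).toLp - (u n).toLp‖ ^ 2 < ε := by
    intro ε hε
    obtain ⟨N, hN⟩ := Metric.cauchySeq_iff.1 hu (Real.sqrt ε) (Real.sqrt_pos.2 hε)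
    refine ⟨N, fun m hm n hn => ?_⟩
    have hd := hN m hm n hn
    rw [dist_eq_norm] at hd
    have h2 : ‖u m - u n‖ ^ 2 < ε := by
      have h3 : ‖u m - u n‖ ^ 2 < Real.sqrt ε ^ 2 := by
        apply pow_lt_pow_left₀ hd (norm_nonneg _)
        norm_num
      rwa [Real.sq_sqrt hε.le] at h3
    have h4 : ‖u m - u n‖ ^ 2 = T.Q1 ((u m).toLp - (u n).toLp) ((u m).toLp - (u n).toLp) := by
      rw [HS.norm_sq]; rfl
    rw [h4] at h2
    rw [WideForm.Q1, real_inner_self_eq_norm_sq] at h2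
    linarith
  obtain ⟨g, hg, htend⟩ := T.closed (fun n => (u n).toLp) hdom hcau
  refine ⟨HS.mk T g hg, ?_⟩
  rw [tendsto_iff_dist_tendsto_zero]
  have h5 : ∀ n, dist (u n) (HS.mk T g hg)
      = Real.sqrt (T.Q ((u n).toLp - g) ((u n).toLp - g) + ‖(u n).toLp - g‖ ^ 2) := by
    intro n
    rw [dist_eq_norm, HS.norm_eq]
    congr 1
    rw [WideForm.Q1, real_inner_self_eq_norm_sq]
    rfl
  simp only [h5]
  have := htend.sqrt
  rwa [Real.sqrt_zero] at this

end WideForm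

namespace WideForm

variable {μ : Measure X} (T : WideForm μ)
variable (𝒜 : ℕ → Set X) (B : Set X)

/-- Functions in the domain supported in some `B ∩ 𝒜 n`, as a submodule of `HS`. -/
def Vsub (hB : MeasurableSet B) (hA : ∀ n, MeasurableSet (𝒜 n)) (hmono : Monotone 𝒜) :
    Submodule ℝ (HS T) where
  carrier := {x | ∃ n, ∀ᵐ y ∂μ, y ∉ B ∩ 𝒜 n → (x.toLp : X → ℝ) y = 0}
  zero_mem' := by
    refine ⟨0, ?_⟩
    filter_upwards [Lp.coeFn_zero (E := ℝ) (p := 2) (μ := μ)] with y hy _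
    simpa using hy
  add_mem' := by
    rintro x y ⟨n, hn⟩ ⟨m, hm⟩
    refine ⟨max n m, ?_⟩
    have hadd := Lp.coeFn_add x.toLp y.toLp
    filter_upwards [hn, hm, hadd] with z hz1 hz2 hz3 hz
    have h1 : (x.toLp : X → ℝ) z = 0 := hz1 fun ⟨hB', hA'⟩ =>
      hz ⟨hB', hmono (le_max_left n m) hA'⟩
    have h2 : (y.toLp : X → ℝ) z = 0 := hz2 fun ⟨hB', hA'⟩ =>
      hz ⟨hB', hmono (le_max_right n m) hA'⟩
    have : ((x + y).toLp : X → ℝ) z = (x.toLp : X → ℝ) z + (y.toLp : X → ℝ) z := by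
      rw [HS.toLp_add]; exact hz3
    rw [this, h1, h2, add_zero]
  smul_mem' := by
    rintro c x ⟨n, hn⟩
    refine ⟨n, ?_⟩
    have hsmul := Lp.coeFn_smul c x.toLp
    filter_upwards [hn, hsmul] with z hz1 hz2 hz
    have : ((c • x).toLp : X → ℝ) z = c • (x.toLp : X → ℝ) z := by
      rw [HS.toLp_smul]; exact hz2
    rw [this, hz1 hz, smul_zero]

variable {𝒜 B}

lemma mem_vsub_iff (x : HS T) (hB : MeasurableSet B) (hA : ∀ n, MeasurableSet (𝒜 n))
    (hmono : Monotone 𝒜) :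
    x ∈ T.Vsub 𝒜 B hB hA hmono ↔ ∃ n, indMul (B ∩ 𝒜 n) x.toLp = x.toLp := by
  constructor
  · rintro ⟨n, hn⟩
    exact ⟨n, (indMul_eq_self_iff (hB.inter (hA n))).2 hn⟩
  · rintro ⟨n, hn⟩
    exact ⟨n, (indMul_eq_self_iff (hB.inter (hA n))).1 hn⟩

lemma mem_nestdom_iff (hB : MeasurableSet B) (hA : ∀ n, MeasurableSet (𝒜 n))
    (hmono : Monotone 𝒜) {u : Lp ℝ 2 μ} :
    u ∈ NestDom T 𝒜 B ↔
      ∃ hu : u ∈ T.dom, HS.mk T u hu ∈ (T.Vsub 𝒜 B hB hA hmono).topologicalClosure := by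
  constructor
  · rintro ⟨hu, g, hg, htend⟩
    refine ⟨hu, ?_⟩
    have hmem : ∀ k, HS.mk T (g k) (hg k).1 ∈ T.Vsub 𝒜 B hB hA hmono := by
      intro k
      rw [mem_vsub_iff]
      simpa using (hg k).2
    have htendH : Tendsto (fun k => HS.mk T (g k) (hg k).1) atTop (nhds (HS.mk T u hu)) := by
      rw [tendsto_iff_dist_tendsto_zero]
      have h5 : ∀ k, dist (HS.mk T (g k) (hg k).1) (HS.mk T u hu)
          = Real.sqrt (T.Q (g k - u) (g k - u) + ‖g k - u‖ ^ 2) := by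
        intro k
        rw [dist_eq_norm, HS.norm_eq]
        congr 1
        rw [WideForm.Q1, real_inner_self_eq_norm_sq]
        rfl
      simp only [h5]
      have := htend.sqrt
      rwa [Real.sqrt_zero] at this
    have : HS.mk T u hu ∈ closure ((T.Vsub 𝒜 B hB hA hmono : Set (HS T))) :=
      mem_closure_of_tendsto htendH (Eventually.of_forall hmem)
    rwa [← Submodule.topologicalClosure_coe, SetLike.mem_coe] at this
  · rintro ⟨hu, hcl⟩
    rw [← SetLike.mem_coe, Submodule.topologicalClosure_coe, mem_closure_iff_seq_limit] at hcl
    obtain ⟨y, hy, hylim⟩ := hcl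
    refine ⟨hu, fun k => (y k).toLp, fun k => ⟨HS.mem T (y k), ?_⟩, ?_⟩
    · exact (mem_vsub_iff T _ hB hA hmono).1 (hy k)
    · have hnorm : ∀ k, T.Q ((y k).toLp - u) ((y k).toLp - u) + ‖(y k).toLp - u‖ ^ 2
          = ‖y k - HS.mk T u hu‖ ^ 2 := by
        intro k
        rw [HS.norm_sq, WideForm.Q1, real_inner_self_eq_norm_sq]
        rfl
      simp only [hnorm]
      have h1 : Tendsto (fun k => ‖y k - HS.mk T u hu‖) atTop (nhds 0) := by
        rw [tendsto_iff_dist_tendsto_zero] at hylim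
        simpa [dist_eq_norm] using hylim
      simpa using h1.pow 2

lemma nestdom_smul (hB : MeasurableSet B) (hA : ∀ n, MeasurableSet (𝒜 n)) (hmono : Monotone 𝒜) {u : Lp ℝ 2 μ} (c : ℝ) (hu : u ∈ NestDom T 𝒜 B) :
    c • u ∈ NestDom T 𝒜 B := by
  rw [mem_nestdom_iff T hB hA hmono] at hu ⊢
  obtain ⟨h1, h2⟩ := hu
  exact ⟨Submodule.smul_mem _ c h1, Submodule.smul_mem _ c h2⟩

lemma nestdom_sub (hB : MeasurableSet B) (hA : ∀ n, MeasurableSet (𝒜 n)) (hmono : Monotone 𝒜) {u v : Lp ℝ 2 μ} (hu : u ∈ NestDom T 𝒜 B) (hv : v ∈ NestDom T 𝒜 B) :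
    u - v ∈ NestDom T 𝒜 B := by
  rw [mem_nestdom_iff T hB hA hmono] at hu hv ⊢
  obtain ⟨h1, h2⟩ := hu
  obtain ⟨h3, h4⟩ := hv
  exact ⟨Submodule.sub_mem _ h1 h3, Submodule.sub_mem _ h2 h4⟩

lemma nestdom_neg (hB : MeasurableSet B) (hA : ∀ n, MeasurableSet (𝒜 n)) (hmono : Monotone 𝒜) {u : Lp ℝ 2 μ} (hu : u ∈ NestDom T 𝒜 B) : -u ∈ NestDom T 𝒜 B := by
  rw [mem_nestdom_iff T hB hA hmono] at hu ⊢
  obtain ⟨h1, h2⟩ := hu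
  exact ⟨Submodule.neg_mem _ h1, Submodule.neg_mem _ h2⟩

/-- Density of the range of the resolvent in the form Hilbert space. -/
lemma resolvent_range_dense (G : ℝ → Lp ℝ 2 μ →L[ℝ] Lp ℝ 2 μ) (hG : T.IsResolvent G)
    (z : HS T) (ε : ℝ) (hε : 0 < ε) :
    ∃ y : Lp ℝ 2 μ, ‖z - HS.mk T (G 1 y) ((hG 1 one_pos y).1)‖ < ε := by
  set φ : Lp ℝ 2 μ →ₗ[ℝ] HS T :=
    { toFun := fun y => HS.mk T (G 1 y) ((hG 1 one_pos y).1)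
      map_add' := fun a b => HS.ext T (by simp)
      map_smul' := fun c a => HS.ext T (by simp) } with hφ
  have hinner : ∀ (y : Lp ℝ 2 μ) (w : HS T), ⟪φ y, w⟫ = ⟪y, w.toLp⟫ := by
    intro y w
    rw [HS.inner_def, WideForm.Q1]
    have := (hG 1 one_pos y).2 w.toLp (HS.mem T w)
    rw [one_mul] at this
    exact this
  have horth : (LinearMap.range φ)ᗮ = ⊥ := by
    rw [Submodule.eq_bot_iff]
    intro z hz
    have h1 : ⟪φ z.toLp, z⟫ = 0 := hz _ ⟨z.toLp, rfl⟩
    rw [hinner, real_inner_self_eq_norm_sq] at h1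
    have : z.toLp = 0 := by
      rw [← norm_le_zero_iff]; nlinarith [norm_nonneg z.toLp]
    exact HS.ext T this
  have htop : (LinearMap.range φ).topologicalClosure = ⊤ := by
    rw [← Submodule.orthogonal_orthogonal_eq_closure, horth, Submodule.bot_orthogonal_eq_top]
  have hz : z ∈ closure ((LinearMap.range φ : Submodule ℝ (HS T)) : Set (HS T)) := by
    rw [← Submodule.topologicalClosure_coe, htop]
    trivial
  rw [Metric.mem_closure_iff] at hz
  obtain ⟨b, hb, hdist⟩ := hz (ε := ε) hε
  obtain ⟨y, rfl⟩ := hb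
  refine ⟨y, ?_⟩
  rw [← dist_eq_norm]
  exact hdist

end WideForm

section PosPartLp

variable {μ : Measure X}

lemma lp_posPart_eq (u : Lp ℝ 2 μ) : u ⊔ 0 = (2⁻¹ : ℝ) • (u + |u|) := by
  have h1 : u⁺ - u⁻ = u := posPart_sub_negPart u
  have h2 : u⁺ + u⁻ = |u| := posPart_add_negPart u
  have h3 : u + |u| = (2 : ℝ) • (u ⊔ 0) := by
    rw [← posPart_def, ← posPart_add_negPart u, two_smul]
    nth_rw 1 [← posPart_sub_negPart u]
    abel
  rw [h3, smul_smul]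
  norm_num

lemma lp_coeFn_posPart (u : Lp ℝ 2 μ) :
    ((u ⊔ 0 : Lp ℝ 2 μ) : X → ℝ) =ᵐ[μ] fun x => max ((u : X → ℝ) x) 0 := by
  filter_upwards [Lp.coeFn_sup u 0, Lp.coeFn_zero (E := ℝ) (p := 2) (μ := μ)] with x h1 h2
  rw [h1]
  simp only [Pi.sup_apply, h2]
  rfl

end PosPartLp

namespace WideForm

variable {μ : Measure X} (T : WideForm μ)

lemma posPart_mem_dom (hpp : T.PosPres) {u : Lp ℝ 2 μ} (hu : u ∈ T.dom) :
    u ⊔ 0 ∈ T.dom := by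
  rw [lp_posPart_eq]
  exact Submodule.smul_mem _ _ (Submodule.add_mem _ hu (hpp u hu).1)

lemma Q1_abs_le (hpp : T.PosPres) {u : Lp ℝ 2 μ} (hu : u ∈ T.dom) :
    T.Q1 |u| |u| ≤ T.Q1 u u := by
  rw [Q1, Q1, real_inner_self_eq_norm_sq, real_inner_self_eq_norm_sq, norm_abs_eq_norm]
  have := (hpp u hu).2
  linarith

lemma Q1_posPart_le (hpp : T.PosPres) {u : Lp ℝ 2 μ} (hu : u ∈ T.dom) :
    T.Q1 (u ⊔ 0) (u ⊔ 0) ≤ T.Q1 u u := by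
  set a := T.Q1 u u with ha
  set b := T.Q1 |u| |u| with hb
  set c := T.Q1 u |u| with hc
  have hba : b ≤ a := T.Q1_abs_le hpp hu
  have hcs : c ^ 2 ≤ a * b := T.Q1_cs u |u|
  have hannn : 0 ≤ a := T.Q1_self_nonneg u
  have hbnn : 0 ≤ b := T.Q1_self_nonneg |u|
  have hexp : T.Q1 (u ⊔ 0) (u ⊔ 0) = 4⁻¹ * (a + 2 * c + b) := by
    rw [lp_posPart_eq, T.Q1_smul_left, T.Q1_symm, T.Q1_smul_left, T.Q1_symm, T.Q1_expand]
    ring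
  rw [hexp]
  nlinarith [sq_nonneg (a - b), sq_nonneg (a + b - 2 * c), sq_nonneg (a + b + 2 * c)]

variable {𝒜 : ℕ → Set X} {B : Set X}

set_option maxHeartbeats 1600000 in
/-- The nest domain of a positivity preserving form is closed under taking positive
parts. -/
lemma nestdom_posPart (hpp : T.PosPres) (G : ℝ → Lp ℝ 2 μ →L[ℝ] Lp ℝ 2 μ)
    (hG : T.IsResolvent G) (hB : MeasurableSet B) (hA : ∀ n, MeasurableSet (𝒜 n))
    (hmono : Monotone 𝒜) {u : Lp ℝ 2 μ} (hu : u ∈ NestDom T 𝒜 B) :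
    u ⊔ 0 ∈ NestDom T 𝒜 B := by
  obtain ⟨hud, g, hg, htend⟩ := hu
  have hupd : u ⊔ 0 ∈ T.dom := T.posPart_mem_dom hpp hud
  set K := T.Vsub 𝒜 B hB hA hmono with hK
  set xu : HS T := HS.mk T u hud with hxu
  set xp : HS T := HS.mk T (u ⊔ 0) hupd with hxp
  set xk : ℕ → HS T := fun k => HS.mk T (g k) (hg k).1 with hxk
  set vk : ℕ → HS T := fun k => HS.mk T (g k ⊔ 0) (T.posPart_mem_dom hpp (hg k).1) with hvk
  -- the approximating positive parts belong to K
  have hvkK : ∀ k, vk k ∈ K := by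
    intro k
    obtain ⟨n, hn⟩ := (hg k).2
    have h0 := (indMul_eq_self_iff (hB.inter (hA n))).1 hn
    refine ⟨n, ?_⟩
    filter_upwards [h0, lp_coeFn_posPart (g k)] with y hy1 hy2 hy
    have : ((vk k).toLp : X → ℝ) y = max ((g k : X → ℝ) y) 0 := hy2
    rw [this, hy1 hy, max_self]
  -- convergence of xk to xu in the form norm
  have hdistfun : ∀ (w z : HS T), dist w z = Real.sqrt
      (T.Q (w.toLp - z.toLp) (w.toLp - z.toLp) + ‖w.toLp - z.toLp‖ ^ 2) := by
    intro w z
    rw [dist_eq_norm, HS.norm_eq]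
    congr 1
    rw [WideForm.Q1, real_inner_self_eq_norm_sq]
    rfl
  have hxk_tend : Tendsto xk atTop (nhds xu) := by
    rw [tendsto_iff_dist_tendsto_zero]
    simp only [hdistfun]
    have := htend.sqrt
    rwa [Real.sqrt_zero] at this
  -- L² convergence of g k to u
  have hgL2 : Tendsto (fun k => ‖g k - u‖) atTop (nhds 0) := by
    have hle : ∀ k, ‖g k - u‖ ≤ ‖xk k - xu‖ := fun k => HS.norm_toLp_le T (xk k - xu)
    refine squeeze_zero (fun k => norm_nonneg _) hle ?_
    have := hxk_tend
    rw [tendsto_iff_dist_tendsto_zero] at this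
    simpa [dist_eq_norm] using this
  -- L² convergence of the positive parts
  have hL2 : Tendsto (fun k => ‖(g k ⊔ 0) - (u ⊔ 0)‖) atTop (nhds 0) := by
    apply squeeze_zero (fun k => norm_nonneg _) (fun k => ?_) hgL2
    apply norm_le_norm_of_abs_le_abs
    exact abs_sup_sub_sup_le_abs _ _ _
  -- norm bound
  have hbnd : ∀ k, ‖vk k‖ ≤ ‖xk k‖ := by
    intro k
    have h1 : ‖vk k‖ ^ 2 ≤ ‖xk k‖ ^ 2 := by
      rw [HS.norm_sq, HS.norm_sq]
      exact T.Q1_posPart_le hpp (hg k).1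
    nlinarith [norm_nonneg (vk k), norm_nonneg (xk k)]
  -- the key weak-convergence step
  have hmain : xp ∈ Kᗮᗮ := by
    rw [Submodule.mem_orthogonal]
    intro z hz
    have h0 : ∀ k, ⟪vk k, z⟫ = 0 := fun k => (Submodule.mem_orthogonal K z).1 hz _ (hvkK k)
    have hclaim : Tendsto (fun k => ⟪vk k - xp, z⟫) atTop (nhds 0) := by
      rw [Metric.tendsto_atTop]
      intro ε hε
      -- eventual norm bound
      set C := ‖xu‖ + 1 + ‖xp‖ with hC
      have hCpos : 0 < C := by positivity
      have hnormk : Tendsto (fun k => ‖xk k‖) atTop (nhds ‖xu‖) := hxk_tend.norm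
      obtain ⟨N₀, hN₀⟩ := (Metric.tendsto_atTop.1 hnormk) 1 one_pos
      have hCk : ∀ k ≥ N₀, ‖vk k - xp‖ ≤ C := by
        intro k hk
        have h1 := hN₀ k hk
        rw [Real.dist_eq] at h1
        have h2 : ‖xk k‖ ≤ ‖xu‖ + 1 := by
          cases abs_lt.1 h1 with
          | intro hl hr => linarith
        calc ‖vk k - xp‖ ≤ ‖vk k‖ + ‖xp‖ := norm_sub_le _ _
          _ ≤ ‖xk k‖ + ‖xp‖ := by linarith [hbnd k]
          _ ≤ C := by rw [hC]; linarith
      -- resolvent approximation of z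
      obtain ⟨y, hy⟩ := T.resolvent_range_dense G hG z (ε / (2 * C)) (by positivity)
      set w : HS T := HS.mk T (G 1 y) ((hG 1 one_pos y).1) with hw
      -- L² smallness
      obtain ⟨N₁, hN₁⟩ := (Metric.tendsto_atTop.1 hL2) (ε / (2 * (‖y‖ + 1)))
        (by positivity)
      refine ⟨max N₀ N₁, fun k hk => ?_⟩
      have hk0 : k ≥ N₀ := le_trans (le_max_left _ _) hk
      have hk1 : k ≥ N₁ := le_trans (le_max_right _ _) hk
      have hsecond : ⟪vk k - xp, w⟫ = ⟪y, (g k ⊔ 0) - (u ⊔ 0)⟫ := by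
        rw [real_inner_comm]
        have hdom' : (vk k - xp).toLp ∈ T.dom := HS.mem T _
        have hid := (hG 1 one_pos y).2 ((vk k - xp).toLp) hdom'
        rw [one_mul] at hid
        have : ⟪w, vk k - xp⟫ = T.Q (G 1 y) ((vk k - xp).toLp)
            + ⟪G 1 y, (vk k - xp).toLp⟫ := rfl
        rw [this, hid]
        rfl
      have hb1 : |⟪vk k - xp, z - w⟫| ≤ C * (ε / (2 * C)) := by
        calc |⟪vk k - xp, z - w⟫| ≤ ‖vk k - xp‖ * ‖z - w‖ := abs_real_inner_le_norm _ _
          _ ≤ C * (ε / (2 * C)) := by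
              apply mul_le_mul (hCk k hk0) (le_of_lt hy) (norm_nonneg _) hCpos.le
      have hb2 : |⟪vk k - xp, w⟫| < ε / 2 := by
        rw [hsecond]
        have h5 := hN₁ k hk1
        rw [Real.dist_eq, sub_zero] at h5
        have h6 : ‖(g k ⊔ 0) - (u ⊔ 0)‖ < ε / (2 * (‖y‖ + 1)) := by
          have := abs_of_nonneg (norm_nonneg ((g k ⊔ 0) - (u ⊔ 0)))
          rw [this] at h5; exact h5
        calc |⟪y, (g k ⊔ 0) - (u ⊔ 0)⟫| ≤ ‖y‖ * ‖(g k ⊔ 0) - (u ⊔ 0)‖ :=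
              abs_real_inner_le_norm _ _
          _ ≤ (‖y‖ + 1) * ‖(g k ⊔ 0) - (u ⊔ 0)‖ := by
              apply mul_le_mul_of_nonneg_right _ (norm_nonneg _)
              linarith
          _ < (‖y‖ + 1) * (ε / (2 * (‖y‖ + 1))) := by
              apply mul_lt_mul_of_pos_left h6 (by positivity)
          _ = ε / 2 := by field_simp
      rw [Real.dist_eq, sub_zero]
      have hsplit : ⟪vk k - xp, z⟫ = ⟪vk k - xp, z - w⟫ + ⟪vk k - xp, w⟫ := by
        rw [inner_sub_right]; ring
      rw [hsplit]
      have hCsimp : C * (ε / (2 * C)) = ε / 2 := by field_simp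
      calc |⟪vk k - xp, z - w⟫ + ⟪vk k - xp, w⟫|
          ≤ |⟪vk k - xp, z - w⟫| + |⟪vk k - xp, w⟫| := abs_add_le _ _
        _ < ε / 2 + ε / 2 := by
            apply add_lt_add_of_le_of_lt _ hb2
            rw [← hCsimp]; exact hb1
        _ = ε := by ring
    -- conclude
    have hconst : Tendsto (fun k => ⟪vk k, z⟫) atTop (nhds ⟪xp, z⟫) := by
      have heq : ∀ k, ⟪vk k, z⟫ = ⟪vk k - xp, z⟫ + ⟪xp, z⟫ := by
        intro k; rw [inner_sub_left]; ring
      simp only [heq]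
      simpa using hclaim.add tendsto_const_nhds
    have h00 : Tendsto (fun _ : ℕ => (0 : ℝ)) atTop (nhds (0 : ℝ)) := tendsto_const_nhds
    have : (0 : ℝ) = ⟪xp, z⟫ := by
      apply tendsto_nhds_unique _ hconst
      simpa [h0] using h00
    rw [real_inner_comm, ← this]
  rw [Submodule.orthogonal_orthogonal_eq_closure] at hmain
  exact (T.mem_nestdom_iff hB hA hmono).2 ⟨hupd, hmain⟩

end WideForm

namespace WideForm

variable {μ : Measure X} (T : WideForm μ)

lemma Q_nonpos_of_disjoint (hpp : T.PosPres) {a b : Lp ℝ 2 μ} (hd : a - b ∈ T.dom)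
    (habs : |a - b| = a + b) : T.Q a b ≤ 0 := by
  have h := (hpp _ hd).2
  rw [habs, T.Q_add_add, T.Q_sub_sub] at h
  linarith

lemma inner_zero_of_ae {a b : Lp ℝ 2 μ}
    (h : ∀ᵐ x ∂μ, (a : X → ℝ) x = 0 ∨ (b : X → ℝ) x = 0) : ⟪a, b⟫ = 0 := by
  rw [L2.inner_def]
  have heq : (fun x => ⟪(a : X → ℝ) x, (b : X → ℝ) x⟫) =ᵐ[μ] (fun _ => (0 : ℝ)) := by
    filter_upwards [h] with x hx
    rcases hx with hx | hx <;> simp [RCLike.inner_apply, hx]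
  rw [integral_congr_ae heq, integral_zero]

variable {𝒜 : ℕ → Set X} {B : Set X}

set_option maxHeartbeats 1600000 in
lemma main_aux (hpp : T.PosPres)
    (G : ℝ → Lp ℝ 2 μ →L[ℝ] Lp ℝ 2 μ) (hG : T.IsResolvent G)
    {lam : ℝ} (hlam : 0 ≤ lam) {f : Lp ℝ 2 μ} (hf : f ∈ T.dom)
    (heig : ∀ v ∈ T.dom, T.Q f v = lam * ⟪f, v⟫)
    (hmono : Monotone 𝒜) (hA : ∀ n, MeasurableSet (𝒜 n)) (hB : MeasurableSet B)
    (hsupp : ∀ᵐ x ∂μ, x ∈ B → (((-f) ⊔ 0 : Lp ℝ 2 μ) : X → ℝ) x = 0)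
    (hfp : f ⊔ 0 ∈ NestDom T 𝒜 B)
    (Gp : Lp ℝ 2 μ →L[ℝ] Lp ℝ 2 μ)
    (hGp : ∀ u, Gp u ∈ NestDom T 𝒜 B ∧
      ∀ v ∈ NestDom T 𝒜 B, T.Q (Gp u) v + ⟪Gp u, v⟫ = ⟪u, v⟫) :
    (1 / (1 + lam)) • (f ⊔ 0) ≤ Gp (f ⊔ 0) := by
  have h1pl : (0 : ℝ) < 1 + lam := by linarith
  set fp : Lp ℝ 2 μ := f ⊔ 0 with hfp_def
  set fm : Lp ℝ 2 μ := (-f) ⊔ 0 with hfm_def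
  have hfp_dom : fp ∈ T.dom := T.posPart_mem_dom hpp hf
  have hfm_dom : fm ∈ T.dom := T.posPart_mem_dom hpp (Submodule.neg_mem _ hf)
  have hfpm : fp - fm = f := by
    rw [hfp_def, hfm_def, ← posPart_def, ← negPart_def, posPart_sub_negPart]
  have hfp_eq : fp = f + fm := by rw [← hfpm]; abel
  set h : Lp ℝ 2 μ := (1 + lam) • Gp fp - fp with hh_def
  have hhN : h ∈ NestDom T 𝒜 B :=
    T.nestdom_sub hB hA hmono (T.nestdom_smul hB hA hmono _ (hGp fp).1) hfp
  have hh_dom : h ∈ T.dom := hhN.1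
  set hm : Lp ℝ 2 μ := (-h) ⊔ 0 with hm_def
  have hmN : hm ∈ NestDom T 𝒜 B :=
    T.nestdom_posPart hpp G hG hB hA hmono (T.nestdom_neg hB hA hmono hhN)
  have hm_dom : hm ∈ T.dom := hmN.1
  have hp_dom : h ⊔ 0 ∈ T.dom := T.posPart_mem_dom hpp hh_dom
  -- support facts
  have hm_supp : ∀ᵐ x ∂μ, x ∉ B → (hm : X → ℝ) x = 0 := T.nestdom_support hB hA hmN
  have hm_nonneg : ∀ᵐ x ∂μ, 0 ≤ (hm : X → ℝ) x := by
    filter_upwards [lp_coeFn_posPart (-h)] with x hx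
    rw [hm_def, hx]; exact le_max_right _ _
  have hfm_nonneg : ∀ᵐ x ∂μ, 0 ≤ (fm : X → ℝ) x := by
    filter_upwards [lp_coeFn_posPart (-f)] with x hx
    rw [hfm_def, hx]; exact le_max_right _ _
  -- inner product of fm and hm vanishes
  have hinner0 : ⟪fm, hm⟫ = 0 := by
    apply inner_zero_of_ae
    filter_upwards [hsupp, hm_supp] with x h1 h2
    by_cases hx : x ∈ B
    · exact Or.inl (h1 hx)
    · exact Or.inr (h2 hx)
  -- disjointness gives Q fm hm ≤ 0
  have habs1 : |fm - hm| = fm + hm := by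
    apply Lp.ext
    filter_upwards [Lp.coeFn_abs (fm - hm), Lp.coeFn_sub fm hm, Lp.coeFn_add fm hm,
      hsupp, hm_supp, hm_nonneg, hfm_nonneg] with x k1 k2 k3 k4 k5 k6 k7
    rw [k1, k3]
    simp only [Pi.add_apply]
    have k2' : ((fm - hm : Lp ℝ 2 μ) : X → ℝ) x = (fm : X → ℝ) x - (hm : X → ℝ) x := k2
    rw [k2']
    by_cases hx : x ∈ B
    · rw [k4 hx]; rw [abs_of_nonpos (by linarith)]; ring
    · rw [k5 hx]; rw [abs_of_nonneg (by linarith)]; ring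
  have hQfm : T.Q fm hm ≤ 0 :=
    T.Q_nonpos_of_disjoint hpp (Submodule.sub_mem _ hfm_dom hm_dom) habs1
  -- resolvent identity at hm
  have hres : T.Q1 (Gp fp) hm = ⟪fp, hm⟫ := by
    rw [Q1]; exact (hGp fp).2 hm hmN
  -- eigenvalue computation
  have hinner_f : ⟪f, hm⟫ = ⟪fp, hm⟫ := by
    rw [← hfpm, inner_sub_left, hinner0]; ring
  have hQfp : T.Q fp hm = lam * ⟪fp, hm⟫ + T.Q fm hm := by
    rw [hfp_eq, T.add_left, heig hm hm_dom, hinner_f, ← hfp_eq]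
  have hQ1h : T.Q1 h hm = - T.Q fm hm := by
    rw [hh_def, T.Q1_sub_left, T.Q1_smul_left, hres]
    rw [Q1, hQfp]
    ring
  have hQ1h_nonneg : 0 ≤ T.Q1 h hm := by rw [hQ1h]; linarith
  -- h⁺ and h⁻
  have hsplit : (h ⊔ 0) - hm = h := by
    rw [hm_def, ← posPart_def, ← negPart_def, posPart_sub_negPart]
  have hsplit' : h ⊔ 0 = h + hm := sub_eq_iff_eq_add.mp hsplit
  have hm_eq : hm = (h ⊔ 0) - h := by rw [hsplit']; abel
  have habs2 : |(h ⊔ 0) - hm| = (h ⊔ 0) + hm := by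
    rw [hsplit, hm_def, ← posPart_def, ← negPart_def, posPart_add_negPart]
  have hQP : T.Q (h ⊔ 0) hm ≤ 0 := by
    apply T.Q_nonpos_of_disjoint hpp _ habs2
    rw [hsplit]; exact hh_dom
  have hinner_pm : ⟪(h ⊔ 0 : Lp ℝ 2 μ), hm⟫ = 0 := by
    apply inner_zero_of_ae
    filter_upwards [lp_coeFn_posPart h, lp_coeFn_posPart (-h), Lp.coeFn_neg h]
      with x k1 k2 k3
    rcases le_or_gt ((h : X → ℝ) x) 0 with hx | hx
    · left; rw [k1]; exact max_eq_right hx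
    · right; rw [hm_def, k2]
      have : ((-h : Lp ℝ 2 μ) : X → ℝ) x = -((h : X → ℝ) x) := k3
      rw [this]; exact max_eq_right (by linarith)
  -- conclude hm = 0
  have hfinal : T.Q1 hm hm ≤ 0 := by
    have e1 : T.Q1 hm hm = T.Q1 (h ⊔ 0) hm - T.Q1 h hm := by
      nth_rw 1 [hm_eq]
      rw [T.Q1_sub_left]
    have e2 : T.Q1 (h ⊔ 0) hm ≤ 0 := by
      rw [Q1, hinner_pm]; linarith
    rw [e1]; linarith
  have hm0 : hm = 0 := by
    have := T.norm_sq_le_Q1 hm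
    rw [← norm_le_zero_iff]
    nlinarith [norm_nonneg hm]
  have hge : (0 : Lp ℝ 2 μ) ≤ h := by
    have h2 : -h ⊔ 0 = 0 := by rw [← hm_def]; exact hm0
    exact neg_nonpos.mp (sup_eq_right.mp h2)
  -- final inequality, pointwise
  rw [← Lp.coeFn_le]
  filter_upwards [(Lp.coeFn_nonneg h).2 hge, Lp.coeFn_sub ((1 + lam) • Gp fp) fp,
    Lp.coeFn_smul ((1 : ℝ) + lam) (Gp fp), Lp.coeFn_smul (1 / (1 + lam)) fp]
    with x k1 k2 k3 k4
  have k1' : 0 ≤ ((1 + lam) • Gp fp - fp : Lp ℝ 2 μ) x := by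
    rw [hh_def] at k1; exact k1
  rw [k2] at k1'
  simp only [Pi.sub_apply] at k1'
  rw [k3] at k1'
  simp only [Pi.smul_apply, smul_eq_mul] at k1'
  show ((1 / (1 + lam)) • fp : Lp ℝ 2 μ) x ≤ (Gp fp : X → ℝ) x
  rw [k4]
  simp only [Pi.smul_apply, smul_eq_mul]
  rw [div_mul_eq_mul_div, one_mul, div_le_iff₀ h1pl]
  nlinarith [k1']

end WideForm


/-- for an eigenfunction `f` with eigenvalue `λ` whose positive/negative
parts lie in the nest-restricted domains, the resolvents of the restricted forms satisfy
`G₁^{𝒜,F±} f± ≥ f±/(1+λ)`. -/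
theorem nest_resolvent_lower_bound {μ : Measure X} (T : WideForm μ) (hpp : T.PosPres)
    (hdense : Dense (T.dom : Set (Lp ℝ 2 μ)))
    (G : ℝ → Lp ℝ 2 μ →L[ℝ] Lp ℝ 2 μ) (hG : T.IsResolvent G)
    (hcpt : ∀ α > 0, IsCompactOperator (G α))
    (lam : ℝ) (f : Lp ℝ 2 μ) (hf : f ∈ T.dom) (hf0 : f ≠ 0)
    (heig : ∀ v ∈ T.dom, T.Q f v = lam * ⟪f, v⟫)
    (𝒜 : ℕ → Set X) (hmono : Monotone 𝒜) (hmeas : ∀ n, MeasurableSet (𝒜 n))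
    (hfp : f ⊔ 0 ∈ NestDom T 𝒜 {x | 0 < (f : X → ℝ) x})
    (hfm : (-f) ⊔ 0 ∈ NestDom T 𝒜 {x | (f : X → ℝ) x < 0})
    (Gp Gm : Lp ℝ 2 μ →L[ℝ] Lp ℝ 2 μ)
    (hGp : ∀ u, Gp u ∈ NestDom T 𝒜 {x | 0 < (f : X → ℝ) x} ∧
      ∀ v ∈ NestDom T 𝒜 {x | 0 < (f : X → ℝ) x}, T.Q (Gp u) v + ⟪Gp u, v⟫ = ⟪u, v⟫)
    (hGm : ∀ u, Gm u ∈ NestDom T 𝒜 {x | (f : X → ℝ) x < 0} ∧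
      ∀ v ∈ NestDom T 𝒜 {x | (f : X → ℝ) x < 0}, T.Q (Gm u) v + ⟪Gm u, v⟫ = ⟪u, v⟫) :
    (1 / (1 + lam)) • (f ⊔ 0) ≤ Gp (f ⊔ 0) ∧
      (1 / (1 + lam)) • ((-f) ⊔ 0) ≤ Gm ((-f) ⊔ 0) := by
  have hply : 0 ≤ lam := by
    have h0 := heig f hf
    have h1 : ⟪f, f⟫ = ‖f‖ ^ 2 := real_inner_self_eq_norm_sq f
    have h2 : 0 < ‖f‖ := norm_pos_iff.2 hf0
    have h3 := T.nonneg f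
    have h4 : 0 < ‖f‖ ^ 2 := by positivity
    by_contra hneg
    have h5 : lam < 0 := lt_of_not_ge hneg
    have h6 := mul_neg_of_neg_of_pos h5 h4
    rw [h1] at h0
    linarith
  have hfmeas := (Lp.stronglyMeasurable f).measurable
  have hBp : MeasurableSet {x | 0 < (f : X → ℝ) x} :=
    measurableSet_lt measurable_const hfmeas
  have hBm : MeasurableSet {x | (f : X → ℝ) x < 0} :=
    measurableSet_lt hfmeas measurable_const
  constructor
  · apply T.main_aux hpp G hG hply hf heig hmono hmeas hBp _ hfp Gp hGp
    filter_upwards [lp_coeFn_posPart (-f), Lp.coeFn_neg f] with x h1 h2 hx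
    rw [h1]
    have h3 : ((-f : Lp ℝ 2 μ) : X → ℝ) x = -((f : X → ℝ) x) := h2
    rw [h3]
    exact max_eq_right (neg_nonpos.mpr (le_of_lt hx))
  · have hfneg : -f ∈ T.dom := Submodule.neg_mem _ hf
    have heig' : ∀ v ∈ T.dom, T.Q (-f) v = lam * ⟪-f, v⟫ := by
      intro v hv
      rw [T.Q_neg_left, heig v hv, inner_neg_left]
      ring
    apply T.main_aux hpp G hG hply hfneg heig' hmono hmeas hBm _ hfm Gm hGm
    rw [neg_neg]
    filter_upwards [lp_coeFn_posPart f] with x h1 hx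
    rw [h1]
    exact max_eq_right (le_of_lt hx)
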